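/- Assume w is exponentially bounded. If the density of the second species is bounded on D_mu, i.e. there exists C >= 0 such that R_2(mu) <= C for all mu in D_mu, then D_mu is bounded in the second coordinate: the set {mu_2 : (mu_1, mu_2) in D_mu for some mu_1} is bounded above. Equivalently, if D_mu is unbounded in the mu_2 direction, then sup over mu in D_mu of R_2(mu) = infinity. The analogous statement holds with the roles of the two coordinates interchanged. -/

import Mathlib

open Real Set Filter Topology

noncomputable section

/-- Euclidean norm `|k|` of a pair of naturals. -/
def knorm (k : ℕ × ℕ) : ℝ := Real.sqrt ((k.1 : ℝ) ^ 2 + (k.2 : ℝ) ^ 2)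

/-- Dot product `μ·k` of a chemical potential with an occupation vector. -/
def dotNat (μ : ℝ × ℝ) (k : ℕ × ℕ) : ℝ := μ.1 * k.1 + μ.2 * k.2

/-- Summand `w(k) exp(μ·k)` of the grand-canonical partition function. -/
def zsummand (w : ℕ × ℕ → ℝ) (μ : ℝ × ℝ) (k : ℕ × ℕ) : ℝ := w k * Real.exp (dotNat μ k)

/-- `dom z`: the set of `μ` where `z(μ) = ∑_k w(k) exp(μ·k)` is finite. -/
def domz (w : ℕ × ℕ → ℝ) : Set (ℝ × ℝ) := {μ | Summable (zsummand w μ)}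

/-- `D_μ`: the set of `μ` where `∑_k k_i w(k) exp(μ·k)` is finite for `i = 1,2`. -/
def Dmu (w : ℕ × ℕ → ℝ) : Set (ℝ × ℝ) :=
  {μ | Summable (fun k : ℕ × ℕ => (k.1 : ℝ) * zsummand w μ k) ∧
       Summable (fun k : ℕ × ℕ => (k.2 : ℝ) * zsummand w μ k)}

/-- `w` is exponentially bounded: `w(k) ≤ ξ^|k|` for some `ξ > 0`. -/
def ExpBounded (w : ℕ × ℕ → ℝ) : Prop := ∃ ξ : ℝ, 0 < ξ ∧ ∀ k : ℕ × ℕ, w k ≤ ξ ^ knorm k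

/-- The grand-canonical partition function `z(μ)`. -/
def zfun (w : ℕ × ℕ → ℝ) (μ : ℝ × ℝ) : ℝ := ∑' k : ℕ × ℕ, zsummand w μ k

/-- The pressure `p(μ) = log z(μ)`. -/
def press (w : ℕ × ℕ → ℝ) (μ : ℝ × ℝ) : ℝ := Real.log (zfun w μ)

/-- The single-site grand-canonical mass function `ν¹_μ(k) = w(k) exp(μ·k)/z(μ)`. -/
def nu1 (w : ℕ × ℕ → ℝ) (μ : ℝ × ℝ) (k : ℕ × ℕ) : ℝ := zsummand w μ k / zfun w μ

/-- Density of the first species `R₁(μ)`. -/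
def R1 (w : ℕ × ℕ → ℝ) (μ : ℝ × ℝ) : ℝ := ∑' k : ℕ × ℕ, (k.1 : ℝ) * nu1 w μ k

/-- Density of the second species `R₂(μ)`. -/
def R2 (w : ℕ × ℕ → ℝ) (μ : ℝ × ℝ) : ℝ := ∑' k : ℕ × ℕ, (k.2 : ℝ) * nu1 w μ k

/-- The density map `R(μ) = (R₁(μ), R₂(μ))`. -/
def Rmap (w : ℕ × ℕ → ℝ) (μ : ℝ × ℝ) : ℝ × ℝ := (R1 w μ, R2 w μ)

/-- Dot product of two real vectors. -/
def dotR (a b : ℝ × ℝ) : ℝ := a.1 * b.1 + a.2 * b.2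

/-! ### Auxiliary lemmas -/

lemma zs_nonneg {w : ℕ × ℕ → ℝ} (hw : ∀ k, 0 < w k) (μ : ℝ × ℝ) (k : ℕ × ℕ) :
    0 ≤ zsummand w μ k := mul_nonneg (hw k).le (Real.exp_nonneg _)

lemma zs_pos {w : ℕ × ℕ → ℝ} (hw : ∀ k, 0 < w k) (μ : ℝ × ℝ) (k : ℕ × ℕ) :
    0 < zsummand w μ k := mul_pos (hw k) (Real.exp_pos _)

lemma summable_zs {w : ℕ × ℕ → ℝ} (hw : ∀ k, 0 < w k) {μ : ℝ × ℝ} (hμ : μ ∈ Dmu w) :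
    Summable (zsummand w μ) := by
  obtain ⟨h1, h2⟩ := hμ
  have hF : Summable (fun k : ℕ × ℕ => if k = ((0, 0) : ℕ × ℕ) then zsummand w μ (0, 0) else 0) :=
    summable_of_ne_finset_zero (s := {((0, 0) : ℕ × ℕ)}) (by intro b hb; simp at hb; simp [hb])
  refine Summable.of_nonneg_of_le (zs_nonneg hw μ) (fun k => ?_) ((h1.add h2).add hF)
  by_cases hk : k = ((0, 0) : ℕ × ℕ)
  · simp [hk, zs_nonneg hw μ (0, 0)]
  · have h1' : (1 : ℝ) ≤ (k.1 : ℝ) + k.2 := by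
      have : 1 ≤ k.1 + k.2 := by
        rcases k with ⟨a, b⟩
        simp only [Prod.mk.injEq, not_and] at hk
        omega
      exact_mod_cast this
    have hnn := zs_nonneg hw μ k
    simp only [hk, if_false]
    nlinarith

lemma Dmu_mono {w : ℕ × ℕ → ℝ} (hw : ∀ k, 0 < w k) {x x' y y' : ℝ}
    (hx : x' ≤ x) (hy : y' ≤ y) (h : (x, y) ∈ Dmu w) : (x', y') ∈ Dmu w := by
  have key : ∀ k : ℕ × ℕ, zsummand w (x', y') k ≤ zsummand w (x, y) k := by
    intro k
    apply mul_le_mul_of_nonneg_left _ (hw k).le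
    apply Real.exp_le_exp.2
    simp only [dotNat]
    have h1 : x' * k.1 ≤ x * k.1 := mul_le_mul_of_nonneg_right hx (Nat.cast_nonneg _)
    have h2 : y' * k.2 ≤ y * k.2 := mul_le_mul_of_nonneg_right hy (Nat.cast_nonneg _)
    linarith
  obtain ⟨h1, h2⟩ := h
  constructor
  · refine Summable.of_nonneg_of_le (fun k => mul_nonneg (Nat.cast_nonneg _) (zs_nonneg hw _ k))
      (fun k => mul_le_mul_of_nonneg_left (key k) (Nat.cast_nonneg _)) h1
  · refine Summable.of_nonneg_of_le (fun k => mul_nonneg (Nat.cast_nonneg _) (zs_nonneg hw _ k))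
      (fun k => mul_le_mul_of_nonneg_left (key k) (Nat.cast_nonneg _)) h2

lemma knorm_le (k : ℕ × ℕ) : knorm k ≤ (k.1 : ℝ) + k.2 := by
  rw [knorm]
  have h : ((k.1 : ℝ)) ^ 2 + (k.2 : ℝ) ^ 2 ≤ ((k.1 : ℝ) + k.2) ^ 2 := by
    nlinarith [Nat.cast_nonneg (α := ℝ) k.1, Nat.cast_nonneg (α := ℝ) k.2]
  calc Real.sqrt ((k.1 : ℝ) ^ 2 + (k.2 : ℝ) ^ 2) ≤ Real.sqrt (((k.1 : ℝ) + k.2) ^ 2) :=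
        Real.sqrt_le_sqrt h
    _ = (k.1 : ℝ) + k.2 := Real.sqrt_sq (by positivity)

/-- The key one-sided statement: if `R₂` is bounded on `D_μ`, then `D_μ` is bounded above
in the second coordinate. -/
lemma key_lemma (w : ℕ × ℕ → ℝ) (hw : ∀ k, 0 < w k) (hexp : ExpBounded w)
    (hC : ∃ C : ℝ, 0 ≤ C ∧ ∀ μ ∈ Dmu w, R2 w μ ≤ C) :
    BddAbove {y : ℝ | ∃ x : ℝ, (x, y) ∈ Dmu w} := by
  obtain ⟨C, hC0, hCb⟩ := hC
  obtain ⟨ξ, hξ0, hξ⟩ := hexp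
  set ζ := max ξ 1 with hζdef
  have hζ1 : (1 : ℝ) ≤ ζ := le_max_right _ _
  have hζ0 : (0 : ℝ) < ζ := lt_of_lt_of_le one_pos hζ1
  have hwb : ∀ k : ℕ × ℕ, w k ≤ ζ ^ k.1 * ζ ^ k.2 := by
    intro k
    calc w k ≤ ξ ^ knorm k := hξ k
      _ ≤ ζ ^ knorm k := Real.rpow_le_rpow hξ0.le (le_max_left _ _) (Real.sqrt_nonneg _)
      _ ≤ ζ ^ ((k.1 : ℝ) + k.2) := Real.rpow_le_rpow_of_exponent_le hζ1 (knorm_le k)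
      _ = ζ ^ k.1 * ζ ^ k.2 := by
          rw [Real.rpow_add hζ0, Real.rpow_natCast, Real.rpow_natCast]
  set x₀ : ℝ := -Real.log ζ - 1 with hx0
  have hζx0 : ζ * Real.exp x₀ = Real.exp (-1) := by
    rw [hx0, sub_eq_add_neg, Real.exp_add, ← mul_assoc, Real.exp_neg, Real.exp_log hζ0,
      mul_inv_cancel₀ hζ0.ne', one_mul]
  set N : ℕ := ⌈C⌉₊ + 1 with hN
  have hNpos : 0 < N := Nat.succ_pos _
  have hCN : C ≤ (N : ℝ) - 1 := by
    have := Nat.le_ceil C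
    rw [hN]
    push_cast
    linarith
  -- dominating summable function
  set g : ℕ × ℕ → ℝ := fun k => (Real.exp (-1)) ^ k.1 * (if k.2 < N then ζ ^ k.2 else 0) with hg
  have hgnn : ∀ k, 0 ≤ g k := by
    intro k
    by_cases h : k.2 < N
    · simp only [hg, if_pos h]
      exact mul_nonneg (pow_nonneg (Real.exp_nonneg _) _) (pow_nonneg hζ0.le _)
    · simp [hg, h]
  have hgs : Summable g := by
    rw [hg]
    apply Summable.mul_of_nonneg (f := fun n : ℕ => (Real.exp (-1)) ^ n)
      (g := fun n : ℕ => if n < N then ζ ^ n else 0)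
    · exact summable_geometric_of_lt_one (Real.exp_nonneg _)
        (by rw [Real.exp_lt_one_iff]; norm_num)
    · exact summable_of_ne_finset_zero (s := Finset.range N)
        (by intro b hb; simp only [Finset.mem_range] at hb; simp [hb])
    · exact fun i => pow_nonneg (Real.exp_nonneg _) _
    · intro j
      by_cases h : j < N
      · simp only [if_pos h]; exact pow_nonneg hζ0.le _
      · simp [h]
  set G := ∑' k, g k with hG
  have hGpos : 0 < G := by
    refine Summable.tsum_pos hgs hgnn (0, 0) ?_
    simp [hg, hNpos]
  set B := max 0 (Real.log ((N : ℝ) * G / w (0, N))) with hB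
  refine ⟨B, fun y hy => ?_⟩
  obtain ⟨x, hxy⟩ := hy
  rcases le_or_gt y 0 with hy0 | hypos
  · exact le_trans hy0 (le_max_left _ _)
  set x' := min x x₀ with hx'
  have hmem : (x', y) ∈ Dmu w := Dmu_mono hw (min_le_left _ _) le_rfl hxy
  have hzs := summable_zs hw hmem
  have hznn := zs_nonneg hw ((x', y) : ℝ × ℝ)
  set z := zfun w (x', y) with hz
  have hzpos : 0 < z := Summable.tsum_pos hzs hznn (0, 0) (zs_pos hw _ _)
  have hsum2 : Summable (fun k : ℕ × ℕ => (k.2 : ℝ) * zsummand w (x', y) k) := hmem.2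
  have hR2 : R2 w (x', y) * z = ∑' k : ℕ × ℕ, (k.2 : ℝ) * zsummand w (x', y) k := by
    rw [R2]
    have heq : (fun k : ℕ × ℕ => (k.2 : ℝ) * nu1 w (x', y) k)
        = fun k : ℕ × ℕ => ((k.2 : ℝ) * zsummand w (x', y) k) / z := by
      funext k; rw [nu1, mul_div_assoc, hz]
    rw [heq, tsum_div_const, div_mul_cancel₀ _ hzpos.ne']
  set T : ℕ × ℕ → ℝ := fun k => if k.2 < N then zsummand w (x', y) k else 0 with hT
  have hTnn : ∀ k, 0 ≤ T k := by
    intro k; by_cases h : k.2 < N <;> simp [hT, h, hznn k]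
  have hTle : ∀ k, T k ≤ zsummand w (x', y) k := by
    intro k; by_cases h : k.2 < N <;> simp [hT, h, hznn k]
  have hTs : Summable T := Summable.of_nonneg_of_le hTnn hTle hzs
  set S := ∑' k, T k with hS
  -- lower bound on ∑ k₂ zs
  have hlow : (N : ℝ) * z - N * S ≤ ∑' k : ℕ × ℕ, (k.2 : ℝ) * zsummand w (x', y) k := by
    have hle : ∀ k : ℕ × ℕ, (N : ℝ) * zsummand w (x', y) k - (N : ℝ) * T k
        ≤ (k.2 : ℝ) * zsummand w (x', y) k := by
      intro k
      by_cases h : k.2 < N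
      · simp only [hT, if_pos h, sub_self]
        exact mul_nonneg (Nat.cast_nonneg _) (hznn k)
      · simp only [hT, if_neg h, mul_zero, sub_zero]
        have : (N : ℝ) ≤ (k.2 : ℝ) := by exact_mod_cast Nat.le_of_not_lt h
        exact mul_le_mul_of_nonneg_right this (hznn k)
    calc (N : ℝ) * z - N * S
        = ∑' k : ℕ × ℕ, ((N : ℝ) * zsummand w (x', y) k - (N : ℝ) * T k) := by
          rw [Summable.tsum_sub (hzs.mul_left _) (hTs.mul_left _), tsum_mul_left, tsum_mul_left]
          rfl
      _ ≤ _ := Summable.tsum_le_tsum hle ((hzs.mul_left _).sub (hTs.mul_left _)) hsum2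
  -- bound on S
  have hSb : S ≤ Real.exp (y * ((N : ℝ) - 1)) * G := by
    have hle : ∀ k : ℕ × ℕ, T k ≤ Real.exp (y * ((N : ℝ) - 1)) * g k := by
      intro k
      by_cases h : k.2 < N
      · have hk2 : (k.2 : ℝ) ≤ (N : ℝ) - 1 := by
          have : (k.2 : ℝ) + 1 ≤ (N : ℝ) := by exact_mod_cast h
          linarith
        simp only [hT, if_pos h, hg]
        have hexpbnd : Real.exp (dotNat (x', y) k)
            ≤ Real.exp (x₀ * k.1) * Real.exp (y * ((N : ℝ) - 1)) := by
          rw [← Real.exp_add]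
          apply Real.exp_le_exp.2
          simp only [dotNat]
          have h1 : x' * k.1 ≤ x₀ * k.1 :=
            mul_le_mul_of_nonneg_right (min_le_right _ _) (Nat.cast_nonneg _)
          have h2 : y * k.2 ≤ y * ((N : ℝ) - 1) := mul_le_mul_of_nonneg_left hk2 hypos.le
          linarith
        calc w k * Real.exp (dotNat (x', y) k)
            ≤ (ζ ^ k.1 * ζ ^ k.2) * (Real.exp (x₀ * k.1) * Real.exp (y * ((N : ℝ) - 1))) := by
              exact mul_le_mul (hwb k) hexpbnd (Real.exp_nonneg _)
                (mul_nonneg (pow_nonneg hζ0.le _) (pow_nonneg hζ0.le _))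
          _ = Real.exp (y * ((N : ℝ) - 1)) * ((Real.exp (-1)) ^ k.1 * ζ ^ k.2) := by
              rw [mul_comm x₀ (k.1 : ℝ), Real.exp_nat_mul, ← hζx0, mul_pow]
              ring
      · simp [hT, hg, h]
    calc S ≤ ∑' k : ℕ × ℕ, Real.exp (y * ((N : ℝ) - 1)) * g k :=
          Summable.tsum_le_tsum hle hTs (hgs.mul_left _)
      _ = Real.exp (y * ((N : ℝ) - 1)) * G := tsum_mul_left
  -- lower bound on z
  have hzb : w (0, N) * Real.exp (y * N) ≤ z := by
    have h := Summable.le_tsum hzs ((0, N) : ℕ × ℕ) (fun j _ => hznn j)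
    simpa [zsummand, dotNat, hz, zfun] using h
  -- combine
  have hzNS : z ≤ (N : ℝ) * S := by
    have h1 : (N : ℝ) * z - N * S ≤ C * z := by
      calc (N : ℝ) * z - N * S ≤ R2 w (x', y) * z := by rw [hR2]; exact hlow
        _ ≤ C * z := mul_le_mul_of_nonneg_right (hCb _ hmem) hzpos.le
    nlinarith [hzpos, hCN]
  have hfin : w (0, N) * Real.exp y ≤ (N : ℝ) * G := by
    have h2 : w (0, N) * Real.exp (y * N) ≤ (N : ℝ) * (Real.exp (y * ((N : ℝ) - 1)) * G) :=
      le_trans hzb (le_trans hzNS (mul_le_mul_of_nonneg_left hSb (Nat.cast_nonneg N)))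
    have hsplit : Real.exp (y * N) = Real.exp (y * ((N : ℝ) - 1)) * Real.exp y := by
      rw [← Real.exp_add]; ring_nf
    rw [hsplit] at h2
    have hepos := Real.exp_pos (y * ((N : ℝ) - 1))
    nlinarith [h2, hepos, Real.exp_pos y, hw ((0, N) : ℕ × ℕ)]
  have hexp_le : Real.exp y ≤ (N : ℝ) * G / w (0, N) := by
    rw [le_div_iff₀ (hw ((0, N) : ℕ × ℕ))]
    linarith [hfin]
  have hfinpos : (0 : ℝ) < (N : ℝ) * G / w (0, N) :=
    lt_of_lt_of_le (Real.exp_pos y) hexp_le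
  have : y ≤ Real.log ((N : ℝ) * G / w (0, N)) := (Real.le_log_iff_exp_le hfinpos).2 hexp_le
  exact le_trans this (le_max_right _ _)

/-! ### Swap lemmas -/

lemma summable_comp_swap {f : ℕ × ℕ → ℝ} : Summable (fun k : ℕ × ℕ => f k.swap) ↔ Summable f :=
  (Equiv.prodComm ℕ ℕ).summable_iff

lemma tsum_comp_swap (f : ℕ × ℕ → ℝ) : ∑' k : ℕ × ℕ, f k.swap = ∑' k : ℕ × ℕ, f k :=
  (Equiv.prodComm ℕ ℕ).tsum_eq f

lemma knorm_swap (k : ℕ × ℕ) : knorm k.swap = knorm k := by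
  simp only [knorm, Prod.fst_swap, Prod.snd_swap]
  ring_nf

lemma zs_swap (w : ℕ × ℕ → ℝ) (x y : ℝ) (k : ℕ × ℕ) :
    zsummand (fun k => w k.swap) (y, x) k = zsummand w (x, y) k.swap := by
  simp only [zsummand, dotNat, Prod.fst_swap, Prod.snd_swap]
  ring_nf

lemma Dmu_swap (w : ℕ × ℕ → ℝ) (x y : ℝ) :
    ((y, x) ∈ Dmu (fun k => w k.swap)) ↔ (x, y) ∈ Dmu w := by
  have e1 : (fun k : ℕ × ℕ => (k.1 : ℝ) * zsummand (fun k => w k.swap) (y, x) k)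
      = fun k : ℕ × ℕ => (fun j : ℕ × ℕ => (j.2 : ℝ) * zsummand w (x, y) j) k.swap := by
    funext k
    simp only [Prod.snd_swap]
    rw [zs_swap]
  have e2 : (fun k : ℕ × ℕ => (k.2 : ℝ) * zsummand (fun k => w k.swap) (y, x) k)
      = fun k : ℕ × ℕ => (fun j : ℕ × ℕ => (j.1 : ℝ) * zsummand w (x, y) j) k.swap := by
    funext k
    simp only [Prod.fst_swap]
    rw [zs_swap]
  constructor
  · rintro ⟨h1, h2⟩
    rw [e1] at h1; rw [e2] at h2
    exact ⟨summable_comp_swap.1 h2, summable_comp_swap.1 h1⟩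
  · rintro ⟨h1, h2⟩
    refine ⟨?_, ?_⟩
    · rw [e1]; exact summable_comp_swap.2 h2
    · rw [e2]; exact summable_comp_swap.2 h1

lemma zfun_swap (w : ℕ × ℕ → ℝ) (x y : ℝ) :
    zfun (fun k => w k.swap) (y, x) = zfun w (x, y) := by
  rw [zfun, zfun, ← tsum_comp_swap (zsummand w (x, y))]
  exact tsum_congr fun k => zs_swap w x y k

lemma R2_swap (w : ℕ × ℕ → ℝ) (x y : ℝ) :
    R2 (fun k => w k.swap) (y, x) = R1 w (x, y) := by
  rw [R2, R1, ← tsum_comp_swap (fun k : ℕ × ℕ => (k.1 : ℝ) * nu1 w (x, y) k)]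
  refine tsum_congr fun k => ?_
  simp only [Prod.fst_swap]
  rw [nu1, nu1, zs_swap, zfun_swap]

/-- If the density of one species is bounded on `D_μ`, then `D_μ` is
bounded above in the corresponding chemical-potential coordinate (both species). -/
theorem statement8 (w : ℕ × ℕ → ℝ) (hw : ∀ k, 0 < w k) (hexp : ExpBounded w) :
    ((∃ C : ℝ, 0 ≤ C ∧ ∀ μ ∈ Dmu w, R2 w μ ≤ C) →
      BddAbove {y : ℝ | ∃ x : ℝ, (x, y) ∈ Dmu w}) ∧
    ((∃ C : ℝ, 0 ≤ C ∧ ∀ μ ∈ Dmu w, R1 w μ ≤ C) →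
      BddAbove {x : ℝ | ∃ y : ℝ, (x, y) ∈ Dmu w}) := by
  constructor
  · exact key_lemma w hw hexp
  · intro hC
    set ws : ℕ × ℕ → ℝ := fun k => w k.swap with hws
    have hws_pos : ∀ k, 0 < ws k := fun k => hw _
    have hws_exp : ExpBounded ws := by
      obtain ⟨ξ, h0, hb⟩ := hexp
      exact ⟨ξ, h0, fun k => by rw [← knorm_swap k]; exact hb _⟩
    have hset : {x : ℝ | ∃ y, (x, y) ∈ Dmu w} = {y : ℝ | ∃ x, (x, y) ∈ Dmu ws} := by
      ext a
      simp only [mem_setOf_eq]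
      constructor
      · rintro ⟨b, hb⟩
        exact ⟨b, (Dmu_swap w a b).2 hb⟩
      · rintro ⟨b, hb⟩
        exact ⟨b, (Dmu_swap w a b).1 hb⟩
    rw [hset]
    apply key_lemma ws hws_pos hws_exp
    obtain ⟨C, hC0, hCb⟩ := hC
    refine ⟨C, hC0, fun μ hμ => ?_⟩
    obtain ⟨a, b⟩ := μ
    rw [show ((a, b) : ℝ × ℝ) = ((a, b) : ℝ × ℝ) from rfl] at hμ
    have := (Dmu_swap w b a).1 hμ
    rw [R2_swap w b a]
    exact hCb (b, a) this
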